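/- For every integer t ≥ 0, T_t((P_m + P_mᵀ)/2) = (P_m^t + (P_mᵀ)^t)/2. In particular, T_m((P_m + P_mᵀ)/2) = I_m (the toroidal (1,m)-grid is periodic at time m), and if m = 2ℓ then T_ℓ((P_m + P_mᵀ)/2) = P_m^ℓ, whose (i, i+ℓ)-entries equal 1 (perfect state transfer from vertex (0,i) to vertex (0,i+ℓ) at time ℓ). -/

import Mathlib

open Matrix Polynomial

open Fin.NatCast in
theorem stmt_18 (m : ℕ) [NeZero m]
    (P : Matrix (Fin m) (Fin m) ℝ)
    (hP : ∀ i : Fin m, P *ᵥ Pi.single i 1 = Pi.single (i - 1) 1) :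
    (∀ t : ℕ,
      Polynomial.aeval ((1 / 2 : ℝ) • (P + Pᵀ)) (Polynomial.Chebyshev.T ℝ t)
        = (1 / 2 : ℝ) • (P ^ t + Pᵀ ^ t)) ∧
    (Polynomial.aeval ((1 / 2 : ℝ) • (P + Pᵀ)) (Polynomial.Chebyshev.T ℝ m) = 1) ∧
    (∀ ℓ : ℕ, m = 2 * ℓ →
      Polynomial.aeval ((1 / 2 : ℝ) • (P + Pᵀ)) (Polynomial.Chebyshev.T ℝ ℓ) = P ^ ℓ ∧
      ∀ i : Fin m, (P ^ ℓ) i (i + (ℓ : Fin m)) = 1) := by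
  -- entries of P
  have hPe : ∀ i j : Fin m, P i j = if i = j - 1 then 1 else 0 := by
    intro i j
    have := congrFun (hP j) i
    simpa [Pi.single_apply] using this
  -- columns of P ^ t
  have hcol : ∀ (t : ℕ) (j : Fin m), (P ^ t) *ᵥ Pi.single j 1 = Pi.single (j - (t : Fin m)) 1 := by
    intro t
    induction t with
    | zero =>
      intro j
      ext i
      simp [Matrix.one_apply, Pi.single_apply, eq_comm]
    | succ t ih =>
      intro j
      have : P ^ (t + 1) = P * P ^ t := by rw [pow_succ']
      rw [this, ← Matrix.mulVec_mulVec, ih, hP]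
      have : j - (((t : ℕ) + 1 : ℕ) : Fin m) = j - (t : Fin m) - 1 := by
        push_cast
        abel
      rw [this]
  have hentry : ∀ (t : ℕ) (i j : Fin m),
      (P ^ t) i j = if i = j - (t : Fin m) then 1 else 0 := by
    intro t i j
    have := congrFun (hcol t j) i
    simpa [Pi.single_apply] using this
  -- P ^ m = 1
  have hPm : P ^ m = 1 := by
    ext i j
    rw [hentry]
    simp [Matrix.one_apply, eq_comm]
  -- Pᵀ = P ^ (m - 1)
  have hm1 : ((m - 1 : ℕ) : Fin m) = -1 := by
    have h1 : 1 ≤ m := NeZero.one_le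
    open Fin.CommRing in (push_cast [Nat.cast_sub h1]; simp)
  have hT : Pᵀ = P ^ (m - 1) := by
    ext i j
    rw [Matrix.transpose_apply, hPe, hentry, hm1]
    simp [sub_neg_eq_add, eq_sub_iff_add_eq, eq_comm (a := i) (b := j + 1)]
  set Q := Pᵀ with hQ
  have hm1' : m - 1 + 1 = m := by
    have : 1 ≤ m := NeZero.one_le
    omega
  have hPQ : P * Q = 1 := by
    rw [hT, ← pow_succ', hm1', hPm]
  have hQP : Q * P = 1 := by
    rw [hT, ← pow_succ, hm1', hPm]
  set A := (1 / 2 : ℝ) • (P + Q) with hA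
  -- main Chebyshev identity
  have key : ∀ t : ℕ, Polynomial.aeval A (Polynomial.Chebyshev.T ℝ t)
      = (1 / 2 : ℝ) • (P ^ t + Q ^ t) := by
    intro t
    induction t using Nat.strong_induction_on with
    | _ t ih =>
      match t with
      | 0 =>
        rw [show ((0 : ℕ) : ℤ) = 0 by simp, Polynomial.Chebyshev.T_zero, _root_.map_one,
          pow_zero, pow_zero, smul_add, ← add_smul]
        norm_num
      | 1 =>
        rw [show ((1 : ℕ) : ℤ) = 1 by simp, Polynomial.Chebyshev.T_one,
          Polynomial.aeval_X, pow_one, pow_one]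
      | (t + 2) =>
        have h2 : ((t + 2 : ℕ) : ℤ) = (t : ℤ) + 2 := by push_cast; ring
        rw [h2, Polynomial.Chebyshev.T_add_two]
        have e1 : ((t : ℤ) + 1) = ((t + 1 : ℕ) : ℤ) := by push_cast; ring
        rw [e1, map_sub, _root_.map_mul, _root_.map_mul, map_ofNat, Polynomial.aeval_X,
          ih (t + 1) (by omega), ih t (by omega)]
        have hPQt : P * Q ^ (t + 1) = Q ^ t := by
          rw [pow_succ', ← mul_assoc, hPQ, one_mul]
        have hQPt : Q * P ^ (t + 1) = P ^ t := by
          rw [pow_succ', ← mul_assoc, hQP, one_mul]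
        rw [hA]
        have h2PQ : (2 : Matrix (Fin m) (Fin m) ℝ) * ((1 / 2 : ℝ) • (P + Q)) = P + Q := by
          rw [mul_smul_comm, two_mul, smul_add, ← add_smul]
          norm_num
        rw [h2PQ, mul_smul_comm, add_mul, mul_add, mul_add, hPQt, hQPt,
          ← pow_succ', ← pow_succ', show t + 1 + 1 = t + 2 from rfl, ← smul_sub]
        congr 1
        abel
  refine ⟨key, ?_, ?_⟩
  · rw [key m, hPm]
    have hQm : Q ^ m = 1 := by
      rw [hQ, ← Matrix.transpose_pow, hPm, Matrix.transpose_one]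
    rw [hQm, ← two_smul ℝ (1 : Matrix (Fin m) (Fin m) ℝ), smul_smul]
    norm_num
  · intro ℓ hℓ
    have hQℓ : Q ^ ℓ = P ^ ℓ := by
      have h1 : P ^ ℓ * P ^ ℓ = 1 := by
        have he : ℓ + ℓ = m := by omega
        rw [← pow_add, he, hPm]
      have h2 : Q ^ ℓ * P ^ ℓ = 1 := by
        rw [hT, ← pow_mul, ← pow_add]
        have he : (m - 1) * ℓ + ℓ = m * ℓ := by
          conv_rhs => rw [← hm1']
          ring
        rw [he, pow_mul, hPm, one_pow]
      calc Q ^ ℓ = Q ^ ℓ * (P ^ ℓ * P ^ ℓ) := by rw [h1, mul_one]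
        _ = (Q ^ ℓ * P ^ ℓ) * P ^ ℓ := by rw [mul_assoc]
        _ = P ^ ℓ := by rw [h2, one_mul]
    constructor
    · rw [key ℓ, hQℓ, ← two_smul ℝ (P ^ ℓ), smul_smul]
      norm_num
    · intro i
      rw [hentry]
      simp
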